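/- arXiv:1506.03424 — 2 statements merged into one kernel-verified Lean document; each statement's English description precedes it below -/
import Mathlib

section
/- For n ≥ 0, the degenerate poly-Bernoulli number β^{(k)}_{n,λ} equals (1/(n+1)) ∑_{l=0}^{n+1} C(n+1, l) B_l (β^{(k)}_{n+1-l,λ}(1) - β^{(k)}_{n+1-l,λ}), where B_l are the ordinary Bernoulli numbers. -/
open PowerSeries Finset

/-- The exponential series `e^{xt}`. -/
noncomputable def expS (x : ℚ) : PowerSeries ℚ :=
  PowerSeries.mk fun n => x ^ n / (n.factorial : ℚ)

/-- The degenerate exponential `(1+λt)^{x/λ} = exp((x/λ)log(1+λt))`, whose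
`n`-th coefficient is the generalized falling factorial `x(x-λ)⋯(x-(n-1)λ)/n!`. -/
noncomputable def degExp (l x : ℚ) : PowerSeries ℚ :=
  PowerSeries.mk fun n => (∏ i ∈ Finset.range n, (x - (i : ℚ) * l)) / (n.factorial : ℚ)

/-- The polylogarithm `Li_k(X) = ∑_{n ≥ 1} X^n / n^k` as a formal power series. -/
noncomputable def polylog (k : ℤ) : PowerSeries ℚ :=
  PowerSeries.mk fun n => if n = 0 then 0 else ((n : ℚ) ^ k)⁻¹

/-- Composition `f(g(t))` for `g` with zero constant term. -/
noncomputable def compPS (f g : PowerSeries ℚ) : PowerSeries ℚ :=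
  PowerSeries.mk fun n =>
    ∑ m ∈ Finset.range (n + 1), PowerSeries.coeff m f * PowerSeries.coeff n (g ^ m)

/-- Division by `t` (valid for series of order ≥ 1). -/
noncomputable def divT (f : PowerSeries ℚ) : PowerSeries ℚ :=
  PowerSeries.mk fun n => PowerSeries.coeff (n + 1) f

/-- `A(t) = Li_k(1 - (1+λt)^{-1/λ}) / ((1+λt)^{1/λ} - 1)`. -/
noncomputable def Aser (k : ℤ) (l : ℚ) : PowerSeries ℚ :=
  divT (compPS (polylog k) (1 - degExp l (-1))) * (divT (degExp l 1 - 1))⁻¹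

/-- The degenerate poly-Bernoulli polynomial `β^{(k)}_{n,λ}(x)`, defined by
`A(t) e^{xt} = ∑ β^{(k)}_{n,λ}(x) t^n / n!`. -/
noncomputable def dpB (k : ℤ) (l : ℚ) (n : ℕ) (x : ℚ) : ℚ :=
  (n.factorial : ℚ) * PowerSeries.coeff n (Aser k l * expS x)

lemma expS_zero : expS 0 = 1 := by
  ext n
  cases n <;> simp [expS, PowerSeries.coeff_one]

lemma expS_one : expS 1 = PowerSeries.exp ℚ := by
  ext n
  simp [expS, PowerSeries.coeff_exp, one_div]

lemma dpB_diff (k : ℤ) (l : ℚ) (m : ℕ) :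
    dpB k l m 1 - dpB k l m 0 =
      (m.factorial : ℚ) * PowerSeries.coeff m (Aser k l * (PowerSeries.exp ℚ - 1)) := by
  simp only [dpB, expS_zero, expS_one, mul_sub, mul_one, map_sub]

/-- `β^{(k)}_{n,λ} = (1/(n+1)) ∑_{l=0}^{n+1} C(n+1,l) B_l
    (β^{(k)}_{n+1-l,λ}(1) - β^{(k)}_{n+1-l,λ})`, with `B_l` the Bernoulli numbers. -/
theorem dpB_eq_bernoulli_sum (k : ℤ) (l : ℚ) (n : ℕ) :
    dpB k l n 0 = (1 / (n + 1 : ℚ)) *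
      ∑ i ∈ Finset.range (n + 2),
        ((n + 1).choose i : ℚ) * bernoulli i * (dpB k l (n + 1 - i) 1 - dpB k l (n + 1 - i) 0) := by
  have hkey : Aser k l * X = bernoulliPowerSeries ℚ * (Aser k l * (PowerSeries.exp ℚ - 1)) := by
    rw [mul_left_comm, bernoulliPowerSeries_mul_exp_sub_one]
  have h1 : PowerSeries.coeff n (Aser k l) =
      ∑ i ∈ Finset.range (n + 2),
        (bernoulli i / (i.factorial : ℚ)) *
          PowerSeries.coeff (n + 1 - i) (Aser k l * (PowerSeries.exp ℚ - 1)) := by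
    have h := congrArg (PowerSeries.coeff (n + 1)) hkey
    rw [PowerSeries.coeff_succ_mul_X] at h
    rw [h, PowerSeries.coeff_mul, Finset.Nat.sum_antidiagonal_eq_sum_range_succ_mk]
    refine Finset.sum_congr rfl fun i hi => ?_
    simp [bernoulliPowerSeries]
  have hS : ∑ i ∈ Finset.range (n + 2),
      ((n + 1).choose i : ℚ) * bernoulli i * (dpB k l (n + 1 - i) 1 - dpB k l (n + 1 - i) 0)
      = ((n + 1).factorial : ℚ) * PowerSeries.coeff n (Aser k l) := by
    rw [h1, Finset.mul_sum]
    refine Finset.sum_congr rfl fun i hi => ?_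
    have hile : i ≤ n + 1 := by
      have := Finset.mem_range.mp hi; omega
    have hnat : ((n + 1).choose i : ℚ) * (i.factorial : ℚ) * ((n + 1 - i).factorial : ℚ)
        = ((n + 1).factorial : ℚ) := by
      exact_mod_cast congrArg (Nat.cast (R := ℚ)) (Nat.choose_mul_factorial_mul_factorial hile)
    have hfi : (i.factorial : ℚ) ≠ 0 := by
      exact_mod_cast i.factorial_ne_zero
    rw [dpB_diff]
    field_simp
    linear_combination bernoulli i *
      PowerSeries.coeff (n + 1 - i) (Aser k l * (PowerSeries.exp ℚ - 1)) * hnat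
  have hd : dpB k l n 0 = (n.factorial : ℚ) * PowerSeries.coeff n (Aser k l) := by
    simp [dpB, expS_zero]
  have hn1 : ((n : ℚ) + 1) ≠ 0 := by positivity
  rw [hd, hS, Nat.factorial_succ]
  push_cast
  field_simp
end

section
/- For any formal power series h(t) (over a characteristic-0 field), any r ≥ 1, and any polynomial p(x): ⟨h(t)^r | p(x)⟩ = L^{⊗r}( ((e^t-1)/t · h(t))^r p(x) ), where L^{⊗r} denotes applying the Bernoulli functional L(x^n) = B_n in r variables, i.e., composing with the r-fold substitution x = x_1 + ⋯ + x_r and applying L in each variable. In particular, for h(t) = 1, L^{⊗r}( ((e^t-1)/t)^r p(x) ) = p(0). -/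
open PowerSeries Finset

/-- The umbral pairing `⟨f(t) | p(x)⟩`. -/
noncomputable def pair (f : PowerSeries ℚ) (p : Polynomial ℚ) : ℚ :=
  ∑ m ∈ Finset.range (p.natDegree + 1),
    p.coeff m * (m.factorial : ℚ) * PowerSeries.coeff m f

/-- The umbral action `f(t)p(x) = ∑ (a_m/m!) p^{(m)}(x)`. -/
noncomputable def act (f : PowerSeries ℚ) (p : Polynomial ℚ) : Polynomial ℚ :=
  ∑ m ∈ Finset.range (p.natDegree + 1),
    PowerSeries.coeff m f • (Polynomial.derivative^[m] p)

/-- The `r`-fold Bernoulli functional `L^{⊗r}`: substitute `x = x₁ + ⋯ + x_r` and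
apply `L(xᵢ^n) = B_n` in each variable; on a monomial `x^m` this gives
`∑_{m₁+⋯+m_r=m} (m choose m₁,…,m_r) B_{m₁}⋯B_{m_r}`. -/
noncomputable def Lr (r : ℕ) (p : Polynomial ℚ) : ℚ :=
  ∑ m ∈ Finset.range (p.natDegree + 1), p.coeff m *
    ∑ f ∈ Finset.Nat.antidiagonalTuple r m,
      (Nat.multinomial Finset.univ f : ℚ) * ∏ i, bernoulli (f i)

/-! ### Auxiliary lemmas -/

lemma sum_antidiagonalTuple_succ {M : Type*} [AddCommMonoid M] (k n : ℕ)
    (g : (Fin (k + 1) → ℕ) → M) :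
    ∑ f ∈ Finset.Nat.antidiagonalTuple (k + 1) n, g f
      = ∑ ab ∈ Finset.HasAntidiagonal.antidiagonal n, ∑ f ∈ Finset.Nat.antidiagonalTuple k ab.2,
          g (Fin.cons ab.1 f) := by
  rw [Finset.sum_sigma']
  symm
  refine Finset.sum_nbij' (fun x => Fin.cons x.1.1 x.2)
    (fun f => ⟨(f 0, ∑ i : Fin k, f i.succ), fun i => f i.succ⟩) ?_ ?_ ?_ ?_ ?_
  · rintro ⟨⟨a, b⟩, f⟩ hx
    simp only [Finset.mem_sigma, Finset.HasAntidiagonal.mem_antidiagonal,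
      Finset.Nat.mem_antidiagonalTuple] at hx ⊢
    rw [Fin.sum_cons, hx.2, hx.1]
  · intro f hf
    simp only [Finset.Nat.mem_antidiagonalTuple] at hf
    simp only [Finset.mem_sigma, Finset.HasAntidiagonal.mem_antidiagonal,
      Finset.Nat.mem_antidiagonalTuple]
    exact ⟨by rw [← hf, Fin.sum_univ_succ], trivial⟩
  · rintro ⟨⟨a, b⟩, f⟩ hx
    simp only [Finset.mem_sigma, Finset.HasAntidiagonal.mem_antidiagonal,
      Finset.Nat.mem_antidiagonalTuple] at hx
    simp only [Fin.cons_zero, Fin.cons_succ]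
    congr 1
    exact congrArg _ hx.2
  · intro f hf
    exact Fin.cons_self_tail f
  · rintro ⟨⟨a, b⟩, f⟩ _
    rfl

lemma coeff_pow_tuple (φ : PowerSeries ℚ) (r m : ℕ) :
    PowerSeries.coeff m (φ ^ r)
      = ∑ f ∈ Finset.Nat.antidiagonalTuple r m, ∏ i, PowerSeries.coeff (f i) φ := by
  induction r generalizing m with
  | zero =>
    cases m with
    | zero => simp [Finset.Nat.antidiagonalTuple_zero_zero]
    | succ m => simp [Finset.Nat.antidiagonalTuple_zero_succ, PowerSeries.coeff_one]
  | succ r ih =>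
    rw [pow_succ', PowerSeries.coeff_mul, sum_antidiagonalTuple_succ]
    refine Finset.sum_congr rfl fun ab _ => ?_
    rw [ih, Finset.mul_sum]
    refine Finset.sum_congr rfl fun f _ => ?_
    rw [Fin.prod_univ_succ]
    simp [Fin.cons_zero, Fin.cons_succ]

lemma Lr_eq_pair (r : ℕ) (p : Polynomial ℚ) :
    Lr r p = pair (bernoulliPowerSeries ℚ ^ r) p := by
  unfold Lr pair
  refine Finset.sum_congr rfl fun m _ => ?_
  rw [coeff_pow_tuple, mul_assoc]
  congr 1
  rw [Finset.mul_sum]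
  refine Finset.sum_congr rfl fun f hf => ?_
  have hsum : ∑ i, f i = m := Finset.Nat.mem_antidiagonalTuple.mp hf
  have hcoeff : ∀ i : Fin r, PowerSeries.coeff (f i) (bernoulliPowerSeries ℚ)
      = bernoulli (f i) / ((f i).factorial : ℚ) := by
    intro i
    simp [bernoulliPowerSeries, PowerSeries.coeff_mk]
  have hm : ((m.factorial : ℕ) : ℚ)
      = (∏ i, ((f i).factorial : ℚ)) * (Nat.multinomial Finset.univ f : ℚ) := by
    rw [← hsum, ← Nat.multinomial_spec]
    push_cast
    rfl
  calc (Nat.multinomial Finset.univ f : ℚ) * ∏ i, (bernoulli (f i) : ℚ)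
      = (Nat.multinomial Finset.univ f : ℚ)
          * ∏ i, ((f i).factorial : ℚ) * (bernoulli (f i) / ((f i).factorial : ℚ)) := by
        refine congrArg _ (Finset.prod_congr rfl fun i _ => ?_)
        rw [mul_div_cancel₀]
        exact_mod_cast (f i).factorial_ne_zero
    _ = (m.factorial : ℚ) * ∏ i, PowerSeries.coeff (f i) (bernoulliPowerSeries ℚ) := by
        rw [Finset.prod_mul_distrib, hm]
        rw [Finset.prod_congr rfl fun i _ => (hcoeff i)]
        ring

lemma pair_eq_sum (f : PowerSeries ℚ) (p : Polynomial ℚ) {N : ℕ} (hN : p.natDegree < N) :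
    pair f p = ∑ m ∈ Finset.range N,
      p.coeff m * (m.factorial : ℚ) * PowerSeries.coeff m f := by
  unfold pair
  refine Finset.sum_subset (Finset.range_subset_range.mpr hN) fun x _ hx => ?_
  rw [Polynomial.coeff_eq_zero_of_natDegree_lt (by simpa using hx)]
  ring

lemma act_natDegree_le (g : PowerSeries ℚ) (p : Polynomial ℚ) :
    (act g p).natDegree ≤ p.natDegree := by
  unfold act
  refine Polynomial.natDegree_sum_le_of_forall_le _ _ fun m _ => ?_
  exact (Polynomial.natDegree_smul_le _ _).trans
    ((Polynomial.natDegree_iterate_derivative p m).trans (Nat.sub_le _ _))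

lemma coeff_act (g : PowerSeries ℚ) (p : Polynomial ℚ) (k : ℕ) :
    (act g p).coeff k = ∑ m ∈ Finset.range (p.natDegree + 1),
      PowerSeries.coeff m g * (((k + m).descFactorial m : ℚ) * p.coeff (k + m)) := by
  unfold act
  rw [Polynomial.finset_sum_coeff]
  refine Finset.sum_congr rfl fun m _ => ?_
  rw [Polynomial.coeff_smul, Polynomial.coeff_iterate_derivative, smul_eq_mul,
    nsmul_eq_mul]

lemma pair_mul (f g : PowerSeries ℚ) (p : Polynomial ℚ) :
    pair (f * g) p = pair f (act g p) := by
  set N := p.natDegree + 1 with hN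
  have hdeg : (act g p).natDegree < N := lt_of_le_of_lt (act_natDegree_le g p) (Nat.lt_succ_self _)
  rw [pair_eq_sum f (act g p) hdeg, pair_eq_sum (f * g) p (Nat.lt_succ_self _)]
  set G : ℕ × ℕ → ℚ := fun km =>
    PowerSeries.coeff km.1 f * PowerSeries.coeff km.2 g
      * ((km.1 + km.2).factorial : ℚ) * p.coeff (km.1 + km.2) with hG
  have stepA : ∑ n ∈ Finset.range N, p.coeff n * (n.factorial : ℚ)
        * PowerSeries.coeff n (f * g)
      = ∑ n ∈ Finset.range N, ∑ ab ∈ Finset.HasAntidiagonal.antidiagonal n, G ab := by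
    refine Finset.sum_congr rfl fun n _ => ?_
    rw [PowerSeries.coeff_mul, Finset.mul_sum]
    refine Finset.sum_congr rfl fun ab hab => ?_
    have h := Finset.HasAntidiagonal.mem_antidiagonal.mp hab
    simp only [hG, ← h]
    ring
  have hdisj : (↑(Finset.range N) : Set ℕ).PairwiseDisjoint
      (fun n => (Finset.HasAntidiagonal.antidiagonal n : Finset (ℕ × ℕ))) := by
    intro a _ b _ hab
    simp only [Function.onFun, Finset.disjoint_left, Finset.HasAntidiagonal.mem_antidiagonal]
    intro x h1 h2
    omega
  have stepB : ∑ n ∈ Finset.range N, ∑ ab ∈ Finset.HasAntidiagonal.antidiagonal n, G ab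
      = ∑ km ∈ Finset.range N ×ˢ Finset.range N, G km := by
    rw [← Finset.sum_biUnion hdisj]
    refine Finset.sum_subset ?_ ?_
    · intro km hkm
      simp only [Finset.mem_biUnion, Finset.mem_range, Finset.HasAntidiagonal.mem_antidiagonal] at hkm
      obtain ⟨n, hn, h⟩ := hkm
      simp only [Finset.mem_product, Finset.mem_range]
      omega
    · intro km _ hkm
      simp only [Finset.mem_biUnion, Finset.mem_range, Finset.HasAntidiagonal.mem_antidiagonal] at hkm
      have hge : N ≤ km.1 + km.2 := by
        by_contra hlt
        exact hkm ⟨km.1 + km.2, by omega, rfl⟩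
      have : p.coeff (km.1 + km.2) = 0 :=
        Polynomial.coeff_eq_zero_of_natDegree_lt (by omega)
      simp [hG, this]
  have stepC : ∑ km ∈ Finset.range N ×ˢ Finset.range N, G km
      = ∑ k ∈ Finset.range N,
          (act g p).coeff k * (k.factorial : ℚ) * PowerSeries.coeff k f := by
    rw [Finset.sum_product]
    refine Finset.sum_congr rfl fun k _ => ?_
    rw [coeff_act, Finset.sum_mul, Finset.sum_mul]
    refine Finset.sum_congr rfl fun m _ => ?_
    have hfact : (k.factorial * (k + m).descFactorial m) = (k + m).factorial := by
      simpa using Nat.factorial_mul_descFactorial (Nat.le_add_left m k)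
    simp only [hG]
    rw [← hfact]
    push_cast
    ring
  rw [stepA, stepB, stepC]

lemma divT_mul_X : divT (expS 1 - 1) * PowerSeries.X = expS 1 - 1 := by
  ext n
  cases n with
  | zero =>
    rw [PowerSeries.coeff_zero_mul_X]
    simp [expS, PowerSeries.coeff_mk, PowerSeries.coeff_one]
  | succ n =>
    rw [PowerSeries.coeff_succ_mul_X]
    simp [divT, PowerSeries.coeff_mk]

lemma bern_mul_divT : bernoulliPowerSeries ℚ * divT (expS 1 - 1) = 1 := by
  have h1 : (bernoulliPowerSeries ℚ * divT (expS 1 - 1)) * PowerSeries.X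
      = 1 * PowerSeries.X := by
    rw [one_mul, mul_assoc, divT_mul_X, expS_one]
    exact bernoulliPowerSeries_mul_exp_sub_one ℚ
  exact mul_right_cancel₀ PowerSeries.X_ne_zero h1

lemma pair_one (p : Polynomial ℚ) : pair 1 p = p.eval 0 := by
  unfold pair
  rw [Finset.sum_eq_single 0]
  · simp [PowerSeries.coeff_one, Polynomial.coeff_zero_eq_eval_zero]
  · intro b _ hb
    simp [PowerSeries.coeff_one, hb]
  · intro h
    exact absurd (Finset.mem_range.mpr (Nat.succ_pos _)) h

/-- for any power series `h(t)`, any `r ≥ 1` and any polynomial `p`,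
`⟨h(t)^r | p(x)⟩ = L^{⊗r}(((e^t-1)/t · h(t))^r p(x))`; in particular, with `h = 1`,
`L^{⊗r}(((e^t-1)/t)^r p(x)) = p(0)`. -/
theorem bernoulli_functional_r (r : ℕ) (hr : 1 ≤ r) :
    (∀ (h : PowerSeries ℚ) (p : Polynomial ℚ),
        pair (h ^ r) p = Lr r (act ((divT (expS 1 - 1) * h) ^ r) p)) ∧
    (∀ p : Polynomial ℚ, Lr r (act ((divT (expS 1 - 1)) ^ r) p) = p.eval 0) := by
  constructor
  · intro h p
    have key : h ^ r
        = bernoulliPowerSeries ℚ ^ r * (divT (expS 1 - 1) * h) ^ r := by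
      rw [← mul_pow, ← mul_assoc, bern_mul_divT, one_mul]
    rw [key, pair_mul, Lr_eq_pair]
  · intro p
    rw [Lr_eq_pair, ← pair_mul, ← mul_pow, bern_mul_divT, one_pow, pair_one]
end
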